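/- arXiv:1403.2898 — 2 statements merged into one kernel-verified Lean document; each statement's English description precedes it below -/
import Mathlib

section
/- Let f : X → G(Z,C) be radially C⁻-semistrictly quasiconvex at x₀ ∈ dom f. Then the set A(f,x₀) ∪ {x₀}, where A(f,x₀) = {x ∈ X | f(x) ⊄ f(x₀)}, is star-shaped at x₀. -/
open Set Pointwise

variable {X Z : Type*}

/-- Scalarization of a set `A ⊆ Z` with respect to `z*`: `inf {-z*(z) | z ∈ A}`. -/
noncomputable def scalSet [AddCommGroup Z] [Module ℝ Z] [TopologicalSpace Z]
    (zs : Z →L[ℝ] ℝ) (A : Set Z) : EReal :=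
  sInf ((fun z : Z => ((-(zs z) : ℝ) : EReal)) '' A)

/-- Semistrict quasiconvexity of an extended-real-valued function on `ℝ`. -/
def SSQCone (ψ : ℝ → EReal) : Prop :=
  ∀ s t : ℝ, ψ s ≠ ⊤ → ψ t ≠ ⊤ → ψ s ≠ ψ t →
    ∀ l ∈ Set.Ioo (0 : ℝ) 1, ψ (s + l * (t - s)) < max (ψ s) (ψ t)

/-- If `f : X → G(Z,C)` is radially `C⁻`-semistrictly quasiconvex at `x₀ ∈ dom f`, then
`A(f,x₀) ∪ {x₀}` is star-shaped at `x₀`, where `A(f,x₀) = {x | f(x) ⊄ f(x₀)}`. -/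
theorem A_starShaped
    [AddCommGroup X] [Module ℝ X]
    [AddCommGroup Z] [Module ℝ Z] [TopologicalSpace Z]
    [IsTopologicalAddGroup Z] [ContinuousSMul ℝ Z] [LocallyConvexSpace ℝ Z]
    (C : Set Z) (hCclosed : IsClosed C) (hCconv : Convex ℝ C) (hC0 : (0 : Z) ∈ C)
    (hCcone : ∀ c ∈ C, ∀ t : ℝ, 0 < t → t • c ∈ C)
    (f : X → Set Z) (hf : ∀ x : X, f x = closure (convexHull ℝ (f x + C)))
    (x₀ : X) (hx₀ : f x₀ ≠ ∅)
    (hssq : ∀ zs : Z →L[ℝ] ℝ, (∀ c ∈ C, zs c ≤ 0) → zs ≠ 0 → ∀ b : X,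
      SSQCone (fun t : ℝ =>
        if t ∈ Set.Icc (0 : ℝ) 1 then scalSet zs (f (x₀ + t • (b - x₀))) else ⊤)) :
    ∀ x ∈ ({y : X | ¬ f y ⊆ f x₀} ∪ {x₀} : Set X), ∀ t ∈ Set.Icc (0 : ℝ) 1,
      x₀ + t • (x - x₀) ∈ ({y : X | ¬ f y ⊆ f x₀} ∪ {x₀} : Set X) := by
  intro x hx t ht
  rcases hx with hx | hx
  · -- x ∈ A(f,x₀)
    rcases eq_or_lt_of_le ht.1 with ht0 | ht0
    · right; simp [← ht0]
    simp only [Set.mem_setOf_eq, Set.not_subset] at hx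
    obtain ⟨z, hzf, hznot⟩ := hx
    have hclosed : IsClosed (f x₀) := by rw [hf]; exact isClosed_closure
    have hconv : Convex ℝ (f x₀) := by rw [hf]; exact (convex_convexHull ℝ _).closure
    obtain ⟨g, u, hgz, hgs⟩ := geometric_hahn_banach_point_closed hconv hclosed hznot
    obtain ⟨w₀, hw₀⟩ := Set.nonempty_iff_ne_empty.mpr hx₀
    have hsum : ∀ w ∈ f x₀, ∀ c ∈ C, w + c ∈ f x₀ := by
      intro w hw c hc
      rw [hf x₀]
      exact subset_closure (subset_convexHull ℝ _ (Set.add_mem_add hw hc))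
    have hgC : ∀ c ∈ C, 0 ≤ g c := by
      intro c hc
      by_contra hneg
      push_neg at hneg
      set s := (g w₀ - u + 1) / (-(g c)) with hs
      have hspos : 0 < s := div_pos (by linarith [hgs w₀ hw₀]) (by linarith)
      have hmem : w₀ + s • c ∈ f x₀ := hsum w₀ hw₀ _ (hCcone c hc s hspos)
      have h2 := hgs _ hmem
      rw [map_add, map_smul, smul_eq_mul] at h2
      have hseq : s * g c = -(g w₀ - u + 1) := by
        rw [hs, div_mul_eq_mul_div, div_eq_iff (by linarith : -g c ≠ 0)]; ring
      linarith
    set zs : Z →L[ℝ] ℝ := -g with hzs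
    have hzsC : ∀ c ∈ C, zs c ≤ 0 := by
      intro c hc
      simp only [hzs, ContinuousLinearMap.neg_apply, neg_nonpos]
      exact hgC c hc
    have hzsne : zs ≠ 0 := by
      intro h
      have h1 : zs z = 0 := by rw [h]; rfl
      have h2 : zs w₀ = 0 := by rw [h]; rfl
      simp only [hzs, ContinuousLinearMap.neg_apply, neg_eq_zero] at h1 h2
      linarith [hgs w₀ hw₀]
    have hscal : ∀ A : Set Z, scalSet zs A = sInf ((fun w : Z => ((g w : ℝ) : EReal)) '' A) := by
      intro A; unfold scalSet
      congr 1
      ext e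
      simp [hzs]
    have hφx₀ : (u : EReal) ≤ scalSet zs (f x₀) := by
      rw [hscal]
      apply le_sInf
      rintro e ⟨w, hw, rfl⟩
      show (u : EReal) ≤ ((g w : ℝ) : EReal)
      exact_mod_cast (hgs w hw).le
    have hφx : scalSet zs (f x) ≤ (g z : EReal) := by
      rw [hscal]; exact sInf_le ⟨z, hzf, rfl⟩
    have hlt : scalSet zs (f x) < scalSet zs (f x₀) :=
      lt_of_le_of_lt hφx (lt_of_lt_of_le (by exact_mod_cast hgz) hφx₀)
    have hx₀le : scalSet zs (f x₀) ≤ (g w₀ : EReal) := by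
      rw [hscal]; exact sInf_le ⟨w₀, hw₀, rfl⟩
    have hx₀top : scalSet zs (f x₀) ≠ ⊤ :=
      (lt_of_le_of_lt hx₀le (EReal.coe_lt_top _)).ne
    have hxtop : scalSet zs (f x) ≠ ⊤ :=
      (lt_of_le_of_lt hφx (EReal.coe_lt_top _)).ne
    have hmain : scalSet zs (f (x₀ + t • (x - x₀))) < scalSet zs (f x₀) := by
      rcases eq_or_lt_of_le ht.2 with ht1 | ht1
      · rw [ht1]
        simpa using hlt
      · have hψ := hssq zs hzsC hzsne x
        have e1 : x₀ + (1:ℝ) • (x - x₀) = x := by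
          rw [one_smul]; abel
        have e0 : x₀ + (0:ℝ) • (x - x₀) = x₀ := by
          rw [zero_smul, add_zero]
        have hψ1 : (if (1:ℝ) ∈ Set.Icc (0:ℝ) 1 then scalSet zs (f (x₀ + (1:ℝ) • (x - x₀))) else ⊤)
            = scalSet zs (f x) := by
          rw [if_pos (by constructor <;> norm_num : (1:ℝ) ∈ Set.Icc (0:ℝ) 1), e1]
        have hψ0 : (if (0:ℝ) ∈ Set.Icc (0:ℝ) 1 then scalSet zs (f (x₀ + (0:ℝ) • (x - x₀))) else ⊤)
            = scalSet zs (f x₀) := by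
          rw [if_pos (by constructor <;> norm_num : (0:ℝ) ∈ Set.Icc (0:ℝ) 1), e0]
        have h1ne : (if (1:ℝ) ∈ Set.Icc (0:ℝ) 1 then scalSet zs (f (x₀ + (1:ℝ) • (x - x₀))) else ⊤) ≠ ⊤ := by
          rw [hψ1]; exact hxtop
        have h0ne : (if (0:ℝ) ∈ Set.Icc (0:ℝ) 1 then scalSet zs (f (x₀ + (0:ℝ) • (x - x₀))) else ⊤) ≠ ⊤ := by
          rw [hψ0]; exact hx₀top
        have hne10 : (if (1:ℝ) ∈ Set.Icc (0:ℝ) 1 then scalSet zs (f (x₀ + (1:ℝ) • (x - x₀))) else ⊤)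
            ≠ (if (0:ℝ) ∈ Set.Icc (0:ℝ) 1 then scalSet zs (f (x₀ + (0:ℝ) • (x - x₀))) else ⊤) := by
          rw [hψ1, hψ0]; exact hlt.ne
        have key := hψ 1 0 h1ne h0ne hne10 (1 - t) ⟨by linarith, by linarith⟩
        have harg : (1 : ℝ) + (1 - t) * (0 - 1) = t := by ring
        simp only at key
        rw [harg, hψ1, hψ0, if_pos ht, max_eq_right hlt.le] at key
        exact key
    left
    intro hsub
    have hle : scalSet zs (f x₀) ≤ scalSet zs (f (x₀ + t • (x - x₀))) := by
      unfold scalSet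
      exact sInf_le_sInf (Set.image_mono hsub)
    exact absurd hmain (not_lt.mpr hle)
  · right
    simp only [Set.mem_singleton_iff] at hx
    simp [hx]
end

section
/- Let f : X → G(Z,C), M ⊆ dom f nonempty, and z* ∈ C⁻ \ {0}. If the scalarization φ_{f,z*} satisfies the inequality φ_{f,z*}(x₀ + t(x - x₀)) ≤ max{φ_{f,z*}(x₀), φ_{f,z*}(x)} for all x ∈ X, t ∈ (0,1), and all x₀ ∈ co M, then the inf-translated scalarization ψ(x) = inf_{m ∈ co M} φ_{f,z*}(m + x) satisfies ψ(tx) ≤ max{ψ(0), ψ(x)} for all x ∈ X and t ∈ (0,1). -/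
open Set Pointwise

variable {X Z : Type*}

/-- If the scalarization `φ = φ_{f,z*}` satisfies the quasiconvexity inequality at every
`x₀ ∈ co M`, then the inf-translated scalarization
`ψ(x) = inf_{m ∈ co M} φ(m + x)` satisfies `ψ(t x) ≤ max{ψ(0), ψ(x)}`. -/
theorem infTranslation_quasiconvex_at_zero
    [AddCommGroup X] [Module ℝ X]
    [AddCommGroup Z] [Module ℝ Z] [TopologicalSpace Z]
    [IsTopologicalAddGroup Z] [ContinuousSMul ℝ Z]
    (C : Set Z) (hCclosed : IsClosed C) (hCconv : Convex ℝ C) (hC0 : (0 : Z) ∈ C)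
    (hCcone : ∀ c ∈ C, ∀ t : ℝ, 0 < t → t • c ∈ C)
    (f : X → Set Z) (hf : ∀ x : X, f x = closure (convexHull ℝ (f x + C)))
    (M : Set X) (hMne : M.Nonempty) (hMdom : ∀ m ∈ M, f m ≠ ∅)
    (zs : Z →L[ℝ] ℝ) (hzs : ∀ c ∈ C, zs c ≤ 0) (hzs0 : zs ≠ 0)
    (hq : ∀ x₀ ∈ convexHull ℝ M, ∀ x : X, ∀ t ∈ Set.Ioo (0 : ℝ) 1,
      scalSet zs (f (x₀ + t • (x - x₀))) ≤
        max (scalSet zs (f x₀)) (scalSet zs (f x))) :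
    ∀ x : X, ∀ t ∈ Set.Ioo (0 : ℝ) 1,
      sInf ((fun m : X => scalSet zs (f (m + t • x))) '' convexHull ℝ M) ≤
        max (sInf ((fun m : X => scalSet zs (f (m + (0 : X)))) '' convexHull ℝ M))
            (sInf ((fun m : X => scalSet zs (f (m + x))) '' convexHull ℝ M)) := by
  intro x t ht
  obtain ⟨t0, t1⟩ := ht
  set φ : X → EReal := fun y => scalSet zs (f y) with hφ
  refine le_of_forall_gt_imp_ge_of_dense fun c hc => ?_
  rw [max_lt_iff] at hc
  obtain ⟨a, ⟨m, hm, rfl⟩, ha⟩ := sInf_lt_iff.mp hc.1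
  obtain ⟨b, ⟨m', hm', rfl⟩, hb⟩ := sInf_lt_iff.mp hc.2
  have hmem : (1 - t) • m + t • m' ∈ convexHull ℝ M :=
    (convex_convexHull ℝ M) hm hm' (by linarith) t0.le (by ring)
  have key : φ ((1 - t) • m + t • m' + t • x) ≤ max (φ m) (φ (m' + x)) := by
    have h := hq m hm (m' + x) t ⟨t0, t1⟩
    have heq : m + t • (m' + x - m) = (1 - t) • m + t • m' + t • x := by
      module
    rw [heq] at h
    exact h
  have hS : sInf ((fun m : X => scalSet zs (f (m + t • x))) '' convexHull ℝ M) ≤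
      φ ((1 - t) • m + t • m' + t • x) :=
    sInf_le ⟨_, hmem, rfl⟩
  refine hS.trans (key.trans (max_le ?_ hb.le))
  simpa [φ] using ha.le
end
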